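/- Let g₁, g₂ be symmetric positive definite N×N matrices with |g₁|, |g₂|, |g₁^{-1}|, |g₂^{-1}| ≤ K, and let n⁽¹⁾, n⁽²⁾ be unit vectors. Writing n_{gᵢ}⁽ʲ⁾ = (n⁽ʲ⁾ᵀ gᵢ^{-1} n⁽ʲ⁾)^{-1/2} gᵢ^{-1} n⁽ʲ⁾, one has | g₁(n_{g₁}⁽¹⁾, n_{g₁}⁽²⁾) − g₂(n_{g₂}⁽¹⁾, n_{g₂}⁽²⁾) | ≤ c |g₁ − g₂| for a constant c depending only on K and N, where g(v,w) = vᵀ g w. -/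

import Mathlib

open Matrix

noncomputable section

/-- Euclidean norm of a vector in `ℝ^N`. -/
def vnorm {N : ℕ} (v : Fin N → ℝ) : ℝ := Real.sqrt (∑ i, (v i) ^ 2)

/-- Frobenius norm of an `N × N` matrix. -/
def frob {N : ℕ} (M : Matrix (Fin N) (Fin N) ℝ) : ℝ := Real.sqrt (∑ i, ∑ j, (M i j) ^ 2)

/-- The `g`-unit normal `n_g = (nᵀ g⁻¹ n)^{-1/2} g⁻¹ n`. -/
def gnormal {N : ℕ} (g : Matrix (Fin N) (Fin N) ℝ) (n : Fin N → ℝ) : Fin N → ℝ :=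
  (Real.sqrt (n ⬝ᵥ g⁻¹ *ᵥ n))⁻¹ • (g⁻¹ *ᵥ n)

/-- The bilinear form of a matrix: `g(v,w) = vᵀ g w`. -/
def bilin {N : ℕ} (g : Matrix (Fin N) (Fin N) ℝ) (v w : Fin N → ℝ) : ℝ :=
  v ⬝ᵥ g *ᵥ w

lemma vnorm_nonneg {N : ℕ} (v : Fin N → ℝ) : 0 ≤ vnorm v := Real.sqrt_nonneg _
lemma frob_nonneg {N : ℕ} (M : Matrix (Fin N) (Fin N) ℝ) : 0 ≤ frob M := Real.sqrt_nonneg _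
lemma vnorm_sq {N : ℕ} (v : Fin N → ℝ) : vnorm v ^ 2 = ∑ i, (v i) ^ 2 :=
  Real.sq_sqrt (by positivity)

lemma frob_neg {N : ℕ} (M : Matrix (Fin N) (Fin N) ℝ) : frob (-M) = frob M := by
  unfold frob; congr 1; simp

lemma abs_dot_le {N : ℕ} (v w : Fin N → ℝ) : |v ⬝ᵥ w| ≤ vnorm v * vnorm w := by
  have h := Finset.sum_mul_sq_le_sq_mul_sq Finset.univ v w
  have habs : |v ⬝ᵥ w| = Real.sqrt ((∑ i, v i * w i) ^ 2) := by
    rw [Real.sqrt_sq_eq_abs]; rfl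
  rw [habs]
  calc Real.sqrt ((∑ i, v i * w i) ^ 2) ≤ Real.sqrt ((∑ i, v i ^ 2) * ∑ i, w i ^ 2) :=
        Real.sqrt_le_sqrt h
    _ = vnorm v * vnorm w := Real.sqrt_mul (by positivity) _

lemma vnorm_mulVec_le {N : ℕ} (M : Matrix (Fin N) (Fin N) ℝ) (v : Fin N → ℝ) :
    vnorm (M *ᵥ v) ≤ frob M * vnorm v := by
  have key : ∑ i, ((M *ᵥ v) i) ^ 2 ≤ (∑ i, ∑ j, (M i j) ^ 2) * ∑ j, (v j) ^ 2 := by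
    rw [Finset.sum_mul]
    apply Finset.sum_le_sum
    intro i _
    simpa [Matrix.mulVec, dotProduct] using Finset.sum_mul_sq_le_sq_mul_sq Finset.univ (M i) v
  calc vnorm (M *ᵥ v) ≤ Real.sqrt ((∑ i, ∑ j, (M i j) ^ 2) * ∑ j, (v j) ^ 2) :=
        Real.sqrt_le_sqrt key
    _ = frob M * vnorm v := Real.sqrt_mul (by positivity) _

lemma abs_dot_mulVec_le {N : ℕ} (v : Fin N → ℝ) (M : Matrix (Fin N) (Fin N) ℝ) (w : Fin N → ℝ) :
    |v ⬝ᵥ M *ᵥ w| ≤ frob M * vnorm v * vnorm w := by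
  calc |v ⬝ᵥ M *ᵥ w| ≤ vnorm v * vnorm (M *ᵥ w) := abs_dot_le _ _
    _ ≤ frob M * vnorm v * vnorm w := by
        nlinarith [vnorm_mulVec_le M w, vnorm_nonneg v, vnorm_nonneg (M *ᵥ w), frob_nonneg M,
          vnorm_nonneg w]

lemma dot_symm {N : ℕ} {A : Matrix (Fin N) (Fin N) ℝ} (hA : A.IsSymm) (x y : Fin N → ℝ) :
    x ⬝ᵥ A *ᵥ y = y ⬝ᵥ A *ᵥ x := by
  rw [Matrix.dotProduct_mulVec]
  nth_rewrite 1 [← hA.eq]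
  rw [Matrix.vecMul_transpose, dotProduct_comm]

lemma posdef_dot_nonneg {N : ℕ} {A : Matrix (Fin N) (Fin N) ℝ} (hA : A.PosSemidef)
    (x : Fin N → ℝ) : 0 ≤ x ⬝ᵥ A *ᵥ x := by
  have := hA.dotProduct_mulVec_nonneg x
  simpa using this

lemma posdef_CS {N : ℕ} {A : Matrix (Fin N) (Fin N) ℝ} (hA : A.PosSemidef) (hAs : A.IsSymm)
    (x y : Fin N → ℝ) : (x ⬝ᵥ A *ᵥ y) ^ 2 ≤ (x ⬝ᵥ A *ᵥ x) * (y ⬝ᵥ A *ᵥ y) := by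
  have h := discrim_le_zero (a := y ⬝ᵥ A *ᵥ y) (b := 2 * (x ⬝ᵥ A *ᵥ y)) (c := x ⬝ᵥ A *ᵥ x) ?_
  · rw [discrim] at h; nlinarith
  · intro t
    have hexp : (x + t • y) ⬝ᵥ A *ᵥ (x + t • y)
        = (y ⬝ᵥ A *ᵥ y) * (t * t) + 2 * (x ⬝ᵥ A *ᵥ y) * t + x ⬝ᵥ A *ᵥ x := by
      rw [Matrix.mulVec_add, Matrix.mulVec_smul]
      simp only [add_dotProduct, smul_dotProduct, dotProduct_add,
        dotProduct_smul, smul_eq_mul]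
      rw [dot_symm hAs y x]
      ring
    have := posdef_dot_nonneg hA (x + t • y)
    rw [hexp] at this
    linarith

set_option maxHeartbeats 1000000 in
lemma scalar_est (K a b a1 a2 b1 b2 δ : ℝ) (hK : 1 ≤ K) (hδ : 0 ≤ δ)
    (ha1 : 1/K ≤ a1) (ha1' : a1 ≤ K) (ha2 : 1/K ≤ a2) (ha2' : a2 ≤ K)
    (hb1 : 1/K ≤ b1) (hb1' : b1 ≤ K) (hb2 : 1/K ≤ b2) (hb2' : b2 ≤ K)
    (ha : |a| ≤ K) (hb : |b| ≤ K)
    (d0 : |a - b| ≤ δ) (d1 : |a1 - b1| ≤ δ) (d2 : |a2 - b2| ≤ δ) :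
    |a / (Real.sqrt a1 * Real.sqrt a2) - b / (Real.sqrt b1 * Real.sqrt b2)| ≤ 3 * K ^ 4 * δ := by
  have hKpos : (0:ℝ) < K := lt_of_lt_of_le one_pos hK
  have hiK : (0:ℝ) < 1/K := by positivity
  have ha1p : 0 < a1 := lt_of_lt_of_le hiK ha1
  have ha2p : 0 < a2 := lt_of_lt_of_le hiK ha2
  have hb1p : 0 < b1 := lt_of_lt_of_le hiK hb1
  have hb2p : 0 < b2 := lt_of_lt_of_le hiK hb2
  set p1 := Real.sqrt a1 with hp1d
  set p2 := Real.sqrt a2 with hp2d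
  set q1 := Real.sqrt b1 with hq1d
  set q2 := Real.sqrt b2 with hq2d
  set s := Real.sqrt K with hsd
  have hp1 : p1 ^ 2 = a1 := Real.sq_sqrt ha1p.le
  have hp2 : p2 ^ 2 = a2 := Real.sq_sqrt ha2p.le
  have hq1 : q1 ^ 2 = b1 := Real.sq_sqrt hb1p.le
  have hq2 : q2 ^ 2 = b2 := Real.sq_sqrt hb2p.le
  have hs : s ^ 2 = K := Real.sq_sqrt hKpos.le
  have p1pos : 0 < p1 := Real.sqrt_pos.mpr ha1p
  have p2pos : 0 < p2 := Real.sqrt_pos.mpr ha2p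
  have q1pos : 0 < q1 := Real.sqrt_pos.mpr hb1p
  have q2pos : 0 < q2 := Real.sqrt_pos.mpr hb2p
  have spos : 0 < s := Real.sqrt_pos.mpr hKpos
  have hp1s : p1 ≤ s := Real.sqrt_le_sqrt ha1'
  have hp2s : p2 ≤ s := Real.sqrt_le_sqrt ha2'
  have hq1s : q1 ≤ s := Real.sqrt_le_sqrt hb1'
  have hq2s : q2 ≤ s := Real.sqrt_le_sqrt hb2'
  have hp1l : 1 ≤ p1 * s := by
    have h1K : 1 ≤ a1 * K := (div_le_iff₀ hKpos).mp ha1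
    have := Real.sqrt_le_sqrt h1K
    rwa [Real.sqrt_one, Real.sqrt_mul ha1p.le] at this
  have hp2l : 1 ≤ p2 * s := by
    have h1K : 1 ≤ a2 * K := (div_le_iff₀ hKpos).mp ha2
    have := Real.sqrt_le_sqrt h1K
    rwa [Real.sqrt_one, Real.sqrt_mul ha2p.le] at this
  have hq1l : 1 ≤ q1 * s := by
    have h1K : 1 ≤ b1 * K := (div_le_iff₀ hKpos).mp hb1
    have := Real.sqrt_le_sqrt h1K
    rwa [Real.sqrt_one, Real.sqrt_mul hb1p.le] at this
  have hq2l : 1 ≤ q2 * s := by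
    have h1K : 1 ≤ b2 * K := (div_le_iff₀ hKpos).mp hb2
    have := Real.sqrt_le_sqrt h1K
    rwa [Real.sqrt_one, Real.sqrt_mul hb2p.le] at this
  -- difference of square roots
  have key1 : |q1 - p1| ≤ δ * s := by
    have e : |q1 - p1| * (q1 + p1) = |b1 - a1| := by
      have expand : (q1 - p1) * (q1 + p1) = b1 - a1 := by linear_combination hq1 - hp1
      calc |q1 - p1| * (q1 + p1) = |q1 - p1| * |q1 + p1| := by
            rw [abs_of_pos (show (0:ℝ) < q1 + p1 by linarith)]
        _ = |(q1 - p1) * (q1 + p1)| := (abs_mul _ _).symm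
        _ = |b1 - a1| := by rw [expand]
    have d1' : |b1 - a1| ≤ δ := by rw [abs_sub_comm]; exact d1
    have hsub : 1 ≤ s * (q1 + p1) := by
      have hre : s * (q1 + p1) = q1 * s + p1 * s := by ring
      linarith [hre ▸ (by linarith [hq1l, hp1l] : (1:ℝ) ≤ q1 * s + p1 * s)]
    have h2 : |q1 - p1| * (s * (q1 + p1)) = s * |b1 - a1| := by rw [← e]; ring
    calc |q1 - p1| ≤ |q1 - p1| * (s * (q1 + p1)) :=
          le_mul_of_one_le_right (abs_nonneg _) hsub
      _ = s * |b1 - a1| := h2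
      _ ≤ s * δ := mul_le_mul_of_nonneg_left d1' spos.le
      _ = δ * s := mul_comm _ _
  have key2 : |q2 - p2| ≤ δ * s := by
    have e : |q2 - p2| * (q2 + p2) = |b2 - a2| := by
      have expand : (q2 - p2) * (q2 + p2) = b2 - a2 := by linear_combination hq2 - hp2
      calc |q2 - p2| * (q2 + p2) = |q2 - p2| * |q2 + p2| := by
            rw [abs_of_pos (show (0:ℝ) < q2 + p2 by linarith)]
        _ = |(q2 - p2) * (q2 + p2)| := (abs_mul _ _).symm
        _ = |b2 - a2| := by rw [expand]
    have d2' : |b2 - a2| ≤ δ := by rw [abs_sub_comm]; exact d2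
    have hsub : 1 ≤ s * (q2 + p2) := by
      have hre : s * (q2 + p2) = q2 * s + p2 * s := by ring
      linarith [hre ▸ (by linarith [hq2l, hp2l] : (1:ℝ) ≤ q2 * s + p2 * s)]
    have h2 : |q2 - p2| * (s * (q2 + p2)) = s * |b2 - a2| := by rw [← e]; ring
    calc |q2 - p2| ≤ |q2 - p2| * (s * (q2 + p2)) :=
          le_mul_of_one_le_right (abs_nonneg _) hsub
      _ = s * |b2 - a2| := h2
      _ ≤ s * δ := mul_le_mul_of_nonneg_left d2' spos.le
      _ = δ * s := mul_comm _ _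
  -- numerator bound
  have hnum : |a * (q1 * q2) - p1 * p2 * b| ≤ 3 * K ^ 2 * δ := by
    have e : a * (q1 * q2) - p1 * p2 * b
        = (a - b) * (q1 * q2) + (b * q2) * (q1 - p1) + (b * p1) * (q2 - p2) := by ring
    rw [e]
    have t1 : |(a - b) * (q1 * q2)| ≤ δ * K := by
      rw [abs_mul]
      have hqq : |q1 * q2| ≤ K := by
        rw [abs_of_pos (by positivity)]
        calc q1 * q2 ≤ s * s := mul_le_mul hq1s hq2s q2pos.le spos.le
          _ = K := by rw [← hs]; ring
      exact mul_le_mul d0 hqq (abs_nonneg _) hδ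
    have t2 : |(b * q2) * (q1 - p1)| ≤ K ^ 2 * δ := by
      rw [abs_mul, abs_mul, abs_of_pos q2pos]
      have step1 : q2 * |q1 - p1| ≤ s * (δ * s) := mul_le_mul hq2s key1 (abs_nonneg _) spos.le
      have step2 : |b| * (q2 * |q1 - p1|) ≤ K * (s * (δ * s)) :=
        mul_le_mul hb step1 (by positivity) hKpos.le
      have heq : K * (s * (δ * s)) = K ^ 2 * δ := by rw [← hs]; ring
      rw [← heq]
      calc |b| * q2 * |q1 - p1| = |b| * (q2 * |q1 - p1|) := by ring
        _ ≤ K * (s * (δ * s)) := step2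
    have t3 : |(b * p1) * (q2 - p2)| ≤ K ^ 2 * δ := by
      rw [abs_mul, abs_mul, abs_of_pos p1pos]
      have step1 : p1 * |q2 - p2| ≤ s * (δ * s) := mul_le_mul hp1s key2 (abs_nonneg _) spos.le
      have step2 : |b| * (p1 * |q2 - p2|) ≤ K * (s * (δ * s)) :=
        mul_le_mul hb step1 (by positivity) hKpos.le
      have heq : K * (s * (δ * s)) = K ^ 2 * δ := by rw [← hs]; ring
      rw [← heq]
      calc |b| * p1 * |q2 - p2| = |b| * (p1 * |q2 - p2|) := by ring
        _ ≤ K * (s * (δ * s)) := step2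
    have habs : |(a - b) * (q1 * q2) + (b * q2) * (q1 - p1) + (b * p1) * (q2 - p2)|
        ≤ |(a - b) * (q1 * q2)| + |(b * q2) * (q1 - p1)| + |(b * p1) * (q2 - p2)| := by
      calc _ ≤ |(a - b) * (q1 * q2) + (b * q2) * (q1 - p1)| + |(b * p1) * (q2 - p2)| :=
            abs_add_le _ _
        _ ≤ _ := by have := abs_add_le ((a - b) * (q1 * q2)) ((b * q2) * (q1 - p1)); linarith
    have hKK : δ * K ≤ K ^ 2 * δ := by
      calc δ * K = δ * K * 1 := by ring
        _ ≤ δ * K * K := mul_le_mul_of_nonneg_left hK (by positivity)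
        _ = K ^ 2 * δ := by ring
    linarith
  -- denominator bound
  have hden : 1 ≤ K ^ 2 * (p1 * p2 * (q1 * q2)) := by
    have h12 : (1:ℝ) * 1 ≤ (p1 * s) * (p2 * s) :=
      mul_le_mul hp1l hp2l zero_le_one (le_trans zero_le_one hp1l)
    have h34 : (1:ℝ) * 1 ≤ (q1 * s) * (q2 * s) :=
      mul_le_mul hq1l hq2l zero_le_one (le_trans zero_le_one hq1l)
    have hall : (1:ℝ) * 1 ≤ ((p1 * s) * (p2 * s)) * ((q1 * s) * (q2 * s)) :=
      mul_le_mul (by linarith) (by linarith) zero_le_one (by positivity)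
    have he : ((p1 * s) * (p2 * s)) * ((q1 * s) * (q2 * s)) = K ^ 2 * (p1 * p2 * (q1 * q2)) := by
      rw [← hs]; ring
    rw [he] at hall; linarith
  -- assemble
  have hP : p1 * p2 ≠ 0 := by positivity
  have hQ : q1 * q2 ≠ 0 := by positivity
  rw [div_sub_div a b hP hQ, abs_div,
    abs_of_pos (show (0:ℝ) < p1 * p2 * (q1 * q2) by positivity), div_le_iff₀ (by positivity)]
  have hfin := mul_le_mul_of_nonneg_left hden (show (0:ℝ) ≤ 3 * K ^ 2 * δ by positivity)
  calc |a * (q1 * q2) - p1 * p2 * b| ≤ 3 * K ^ 2 * δ := hnum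
    _ = 3 * K ^ 2 * δ * 1 := by ring
    _ ≤ 3 * K ^ 2 * δ * (K ^ 2 * (p1 * p2 * (q1 * q2))) := hfin
    _ = 3 * K ^ 4 * δ * (p1 * p2 * (q1 * q2)) := by ring

lemma inv_isSymm {N : ℕ} {g : Matrix (Fin N) (Fin N) ℝ} (h : g.IsSymm) : (g⁻¹).IsSymm := by
  unfold Matrix.IsSymm at h ⊢
  rw [Matrix.transpose_nonsing_inv, h]

lemma vnorm_one_ne_zero {N : ℕ} {n : Fin N → ℝ} (h : vnorm n = 1) : n ≠ 0 := by
  intro h0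
  rw [h0] at h
  simp [vnorm] at h

lemma dot_self_eq_one {N : ℕ} {n : Fin N → ℝ} (h : vnorm n = 1) : n ⬝ᵥ n = 1 := by
  have e : n ⬝ᵥ n = ∑ i, (n i) ^ 2 := by simp [dotProduct, sq]
  rw [e, ← vnorm_sq, h]; norm_num

lemma posdef_inv_dot_pos {N : ℕ} {g : Matrix (Fin N) (Fin N) ℝ} (hpd : g.PosDef)
    {n : Fin N → ℝ} (hn : vnorm n = 1) : 0 < n ⬝ᵥ g⁻¹ *ᵥ n := by
  have := hpd.inv.dotProduct_mulVec_pos (vnorm_one_ne_zero hn)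
  simpa using this

/-- Reduction of the bilinear form of normals to a scalar formula. -/
lemma bilin_gnormal_eq {N : ℕ} {g : Matrix (Fin N) (Fin N) ℝ} (hsymm : g.IsSymm)
    (hpd : g.PosDef) (n₁ n₂ : Fin N → ℝ) :
    bilin g (gnormal g n₁) (gnormal g n₂)
      = (n₁ ⬝ᵥ g⁻¹ *ᵥ n₂) /
        (Real.sqrt (n₁ ⬝ᵥ g⁻¹ *ᵥ n₁) * Real.sqrt (n₂ ⬝ᵥ g⁻¹ *ᵥ n₂)) := by
  have hdet : IsUnit g.det := isUnit_iff_ne_zero.mpr (ne_of_gt hpd.det_pos)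
  unfold bilin gnormal
  rw [Matrix.mulVec_smul, dotProduct_smul, smul_dotProduct]
  rw [Matrix.mulVec_mulVec, Matrix.mul_nonsing_inv g hdet, Matrix.one_mulVec]
  have h1 : (g⁻¹ *ᵥ n₁) ⬝ᵥ n₂ = n₁ ⬝ᵥ g⁻¹ *ᵥ n₂ := by
    rw [dotProduct_comm, dot_symm (inv_isSymm hsymm)]
  rw [h1]
  simp only [smul_eq_mul]
  rw [div_eq_mul_inv, mul_inv]
  ring

/-- The difference bound for the inverse bilinear entries. -/
lemma diff_dot_le {N : ℕ} (K : ℝ) (hK : 0 ≤ K) (g₁ g₂ : Matrix (Fin N) (Fin N) ℝ)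
    (x y : Fin N → ℝ) (h1 : g₁.IsSymm) (hpd1 : g₁.PosDef) (hpd2 : g₂.PosDef)
    (hx : vnorm x = 1) (hy : vnorm y = 1) (hfi1 : frob g₁⁻¹ ≤ K) (hfi2 : frob g₂⁻¹ ≤ K) :
    |x ⬝ᵥ g₁⁻¹ *ᵥ y - x ⬝ᵥ g₂⁻¹ *ᵥ y| ≤ K ^ 2 * frob (g₁ - g₂) := by
  have hd1 : IsUnit g₁.det := isUnit_iff_ne_zero.mpr (ne_of_gt hpd1.det_pos)
  have hd2 : IsUnit g₂.det := isUnit_iff_ne_zero.mpr (ne_of_gt hpd2.det_pos)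
  have hABdiff : g₁⁻¹ - g₂⁻¹ = g₁⁻¹ * ((g₂ - g₁) * g₂⁻¹) := by
    rw [Matrix.sub_mul, Matrix.mul_sub, Matrix.mul_nonsing_inv g₂ hd2, Matrix.mul_one,
      ← Matrix.mul_assoc, Matrix.nonsing_inv_mul g₁ hd1, Matrix.one_mul]
  have e1 : x ⬝ᵥ g₁⁻¹ *ᵥ y - x ⬝ᵥ g₂⁻¹ *ᵥ y
      = (g₁⁻¹ *ᵥ x) ⬝ᵥ (g₂ - g₁) *ᵥ (g₂⁻¹ *ᵥ y) := by
    have h0 : x ⬝ᵥ g₁⁻¹ *ᵥ y - x ⬝ᵥ g₂⁻¹ *ᵥ y = x ⬝ᵥ (g₁⁻¹ - g₂⁻¹) *ᵥ y := by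
      rw [Matrix.sub_mulVec, dotProduct_sub]
    rw [h0, hABdiff]
    rw [← Matrix.mulVec_mulVec, dot_symm (inv_isSymm h1), ← Matrix.mulVec_mulVec,
      dotProduct_comm]
  rw [e1]
  have hn1 : vnorm (g₁⁻¹ *ᵥ x) ≤ K := by
    calc vnorm (g₁⁻¹ *ᵥ x) ≤ frob g₁⁻¹ * vnorm x := vnorm_mulVec_le _ _
      _ = frob g₁⁻¹ := by rw [hx, mul_one]
      _ ≤ K := hfi1
  have hn2 : vnorm (g₂⁻¹ *ᵥ y) ≤ K := by
    calc vnorm (g₂⁻¹ *ᵥ y) ≤ frob g₂⁻¹ * vnorm y := vnorm_mulVec_le _ _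
      _ = frob g₂⁻¹ := by rw [hy, mul_one]
      _ ≤ K := hfi2
  have hfr : frob (g₂ - g₁) = frob (g₁ - g₂) := by
    rw [show g₂ - g₁ = -(g₁ - g₂) from (neg_sub g₁ g₂).symm, frob_neg]
  calc |(g₁⁻¹ *ᵥ x) ⬝ᵥ (g₂ - g₁) *ᵥ (g₂⁻¹ *ᵥ y)|
      ≤ frob (g₂ - g₁) * vnorm (g₁⁻¹ *ᵥ x) * vnorm (g₂⁻¹ *ᵥ y) := abs_dot_mulVec_le _ _ _
    _ ≤ frob (g₂ - g₁) * K * vnorm (g₂⁻¹ *ᵥ y) :=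
        mul_le_mul_of_nonneg_right (mul_le_mul_of_nonneg_left hn1 (frob_nonneg _))
          (vnorm_nonneg _)
    _ ≤ frob (g₂ - g₁) * K * K :=
        mul_le_mul_of_nonneg_left hn2 (mul_nonneg (frob_nonneg _) hK)
    _ = K ^ 2 * frob (g₁ - g₂) := by rw [hfr]; ring

/-- Lower bound for the diagonal entries. -/
lemma inv_dot_lower {N : ℕ} (K : ℝ) (hK : 0 < K) {g : Matrix (Fin N) (Fin N) ℝ}
    (hs : g.IsSymm) (hpd : g.PosDef) {n : Fin N → ℝ} (hn : vnorm n = 1)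
    (hf : frob g ≤ K) : 1 / K ≤ n ⬝ᵥ g⁻¹ *ᵥ n := by
  have hd : IsUnit g.det := isUnit_iff_ne_zero.mpr (ne_of_gt hpd.det_pos)
  set m := g *ᵥ n with hm
  have hAm : g⁻¹ *ᵥ m = n := by
    rw [hm, Matrix.mulVec_mulVec, Matrix.nonsing_inv_mul g hd, Matrix.one_mulVec]
  have hCS := posdef_CS hpd.inv.posSemidef (inv_isSymm hs) n m
  have hval : n ⬝ᵥ g⁻¹ *ᵥ m = 1 := by rw [hAm, dot_self_eq_one hn]
  have hmm : m ⬝ᵥ g⁻¹ *ᵥ m ≤ K := by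
    have e : m ⬝ᵥ g⁻¹ *ᵥ m = n ⬝ᵥ g *ᵥ n := by
      rw [hAm, hm, dotProduct_comm]
    rw [e]
    calc n ⬝ᵥ g *ᵥ n ≤ |n ⬝ᵥ g *ᵥ n| := le_abs_self _
      _ ≤ frob g * vnorm n * vnorm n := abs_dot_mulVec_le _ _ _
      _ = frob g := by rw [hn]; ring
      _ ≤ K := hf
  rw [hval] at hCS
  have hpos : 0 < n ⬝ᵥ g⁻¹ *ᵥ n := posdef_inv_dot_pos hpd hn
  rw [div_le_iff₀ hK]
  nlinarith [mul_le_mul_of_nonneg_left hmm hpos.le]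

/-- Upper bound for entries. -/
lemma inv_dot_upper {N : ℕ} (K : ℝ) {g : Matrix (Fin N) (Fin N) ℝ}
    {x y : Fin N → ℝ} (hx : vnorm x = 1) (hy : vnorm y = 1)
    (hf : frob g⁻¹ ≤ K) : |x ⬝ᵥ g⁻¹ *ᵥ y| ≤ K := by
  calc |x ⬝ᵥ g⁻¹ *ᵥ y| ≤ frob g⁻¹ * vnorm x * vnorm y := abs_dot_mulVec_le _ _ _
    _ = frob g⁻¹ := by rw [hx, hy]; ring
    _ ≤ K := hf

/-- **Stability of the cosine of a dihedral angle under metric perturbations.**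
For symmetric positive definite `g₁, g₂` with matrix and inverse-matrix norms bounded
by `K`, and Euclidean unit vectors `n⁽¹⁾, n⁽²⁾`, one has
`|g₁(n_{g₁}⁽¹⁾, n_{g₁}⁽²⁾) − g₂(n_{g₂}⁽¹⁾, n_{g₂}⁽²⁾)| ≤ c |g₁ − g₂|`
with `c` depending only on `K` and `N`. -/
theorem dihedral_cosine_stability (N : ℕ) (K : ℝ) (hK : 0 < K) :
    ∃ c : ℝ, 0 < c ∧
      ∀ (g₁ g₂ : Matrix (Fin N) (Fin N) ℝ) (n₁ n₂ : Fin N → ℝ),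
        g₁.IsSymm → g₂.IsSymm → g₁.PosDef → g₂.PosDef →
        vnorm n₁ = 1 → vnorm n₂ = 1 →
        frob g₁ ≤ K → frob g₂ ≤ K → frob g₁⁻¹ ≤ K → frob g₂⁻¹ ≤ K →
        |bilin g₁ (gnormal g₁ n₁) (gnormal g₁ n₂)
          - bilin g₂ (gnormal g₂ n₁) (gnormal g₂ n₂)| ≤ c * frob (g₁ - g₂) := by
  refine ⟨3 * (K + 1) ^ 6, by positivity, ?_⟩
  intro g₁ g₂ n₁ n₂ hs1 hs2 hpd1 hpd2 hn1 hn2 hf1 hf2 hfi1 hfi2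
  set K' := K + 1 with hK'd
  have hK'1 : (1:ℝ) ≤ K' := by linarith
  have hK'pos : (0:ℝ) < K' := by linarith
  set ε := frob (g₁ - g₂) with hεd
  have hεnn : 0 ≤ ε := frob_nonneg _
  set δ := K' ^ 2 * ε with hδd
  have hδnn : 0 ≤ δ := by positivity
  rw [bilin_gnormal_eq hs1 hpd1 n₁ n₂, bilin_gnormal_eq hs2 hpd2 n₁ n₂]
  have hmain := scalar_est K'
    (n₁ ⬝ᵥ g₁⁻¹ *ᵥ n₂) (n₁ ⬝ᵥ g₂⁻¹ *ᵥ n₂)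
    (n₁ ⬝ᵥ g₁⁻¹ *ᵥ n₁) (n₂ ⬝ᵥ g₁⁻¹ *ᵥ n₂)
    (n₁ ⬝ᵥ g₂⁻¹ *ᵥ n₁) (n₂ ⬝ᵥ g₂⁻¹ *ᵥ n₂) δ hK'1 hδnn
    (inv_dot_lower K' hK'pos hs1 hpd1 hn1 (by linarith))
    ((le_abs_self _).trans (inv_dot_upper K' hn1 hn1 (by linarith)))
    (inv_dot_lower K' hK'pos hs1 hpd1 hn2 (by linarith))
    ((le_abs_self _).trans (inv_dot_upper K' hn2 hn2 (by linarith)))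
    (inv_dot_lower K' hK'pos hs2 hpd2 hn1 (by linarith))
    ((le_abs_self _).trans (inv_dot_upper K' hn1 hn1 (by linarith)))
    (inv_dot_lower K' hK'pos hs2 hpd2 hn2 (by linarith))
    ((le_abs_self _).trans (inv_dot_upper K' hn2 hn2 (by linarith)))
    (inv_dot_upper K' hn1 hn2 (by linarith))
    (inv_dot_upper K' hn1 hn2 (by linarith))
    ?_ ?_ ?_
  · calc |(n₁ ⬝ᵥ g₁⁻¹ *ᵥ n₂) / (Real.sqrt (n₁ ⬝ᵥ g₁⁻¹ *ᵥ n₁) * Real.sqrt (n₂ ⬝ᵥ g₁⁻¹ *ᵥ n₂))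
          - (n₁ ⬝ᵥ g₂⁻¹ *ᵥ n₂) / (Real.sqrt (n₁ ⬝ᵥ g₂⁻¹ *ᵥ n₁) * Real.sqrt (n₂ ⬝ᵥ g₂⁻¹ *ᵥ n₂))|
        ≤ 3 * K' ^ 4 * δ := hmain
      _ = 3 * K' ^ 6 * ε := by rw [hδd]; ring
      _ = 3 * (K + 1) ^ 6 * frob (g₁ - g₂) := by rw [hεd, hK'd]
  · have h := diff_dot_le K' hK'pos.le g₁ g₂ n₁ n₂ hs1 hpd1 hpd2 hn1 hn2
      (by linarith) (by linarith)
    calc |n₁ ⬝ᵥ g₁⁻¹ *ᵥ n₂ - n₁ ⬝ᵥ g₂⁻¹ *ᵥ n₂| ≤ K' ^ 2 * frob (g₁ - g₂) := h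
      _ = δ := by rw [hδd, hεd]
  · have h := diff_dot_le K' hK'pos.le g₁ g₂ n₁ n₁ hs1 hpd1 hpd2 hn1 hn1
      (by linarith) (by linarith)
    calc |n₁ ⬝ᵥ g₁⁻¹ *ᵥ n₁ - n₁ ⬝ᵥ g₂⁻¹ *ᵥ n₁| ≤ K' ^ 2 * frob (g₁ - g₂) := h
      _ = δ := by rw [hδd, hεd]
  · have h := diff_dot_le K' hK'pos.le g₁ g₂ n₂ n₂ hs1 hpd1 hpd2 hn2 hn2
      (by linarith) (by linarith)
    calc |n₂ ⬝ᵥ g₁⁻¹ *ᵥ n₂ - n₂ ⬝ᵥ g₂⁻¹ *ᵥ n₂| ≤ K' ^ 2 * frob (g₁ - g₂) := h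
      _ = δ := by rw [hδd, hεd]

end
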